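/- Let φ : ℝ² → ℝ² be C² with ‖D²φ‖ uniformly bounded by C on a set containing the orbit of z. Suppose there are constants K ≥ 1 and λ_u > 1 such that ‖Dφ^j_z‖ ≤ K λ_u^j and ‖Dφ^{k−j−1}_{φ^{j+1}(z)}‖·‖Dφ^j_z‖ ≤ K‖Dφ^k_z‖ and ∑_{j=0}^{k−1}‖Dφ^j_z‖ ≤ K‖Dφ^k_z‖ for all 0 ≤ j < k. Then ‖D²φ^k_z‖ ≤ K' ‖Dφ^k_z‖² for a constant K' depending only on K, C. -/

import Mathlib

open ContinuousLinearMap Function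

variable {E : Type*} [NormedAddCommGroup E] [NormedSpace ℝ E]

noncomputable def stmt10T (φ : E → E) (z : E) (k j : ℕ) : E →L[ℝ] E →L[ℝ] E :=
  ((ContinuousLinearMap.compL ℝ E E E (fderiv ℝ (φ^[k - j - 1]) (φ^[j + 1] z))).comp
    ((ContinuousLinearMap.compL ℝ E E E).flip (fderiv ℝ (φ^[j]) z))).comp
    ((fderiv ℝ (fderiv ℝ φ) (φ^[j] z)).comp (fderiv ℝ (φ^[j]) z))

lemma stmt10T_apply (φ : E → E) (z : E) (k j : ℕ) (x v : E) :
    stmt10T φ z k j x v = fderiv ℝ (φ^[k - j - 1]) (φ^[j + 1] z)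
      ((fderiv ℝ (fderiv ℝ φ) (φ^[j] z) (fderiv ℝ (φ^[j]) z x)) (fderiv ℝ (φ^[j]) z v)) := by
  simp [stmt10T]

lemma stmt10_iter_cd {φ : E → E} (hφ : ContDiff ℝ 2 φ) (n : ℕ) : ContDiff ℝ 2 (φ^[n]) := by
  induction n with
  | zero => simpa using contDiff_id
  | succ n ih => rw [Function.iterate_succ']; exact hφ.comp ih

lemma stmt10_step {φ : E → E} (hφ : ContDiff ℝ 2 φ) (m : ℕ) (w : E) :
    fderiv ℝ (φ^[m + 1]) w = (fderiv ℝ φ (φ^[m] w)).comp (fderiv ℝ (φ^[m]) w) := by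
  rw [Function.iterate_succ']
  exact fderiv_comp w (hφ.differentiable two_ne_zero _)
    ((stmt10_iter_cd hφ m).differentiable two_ne_zero _)

lemma stmt10_key {φ : E → E} (hφ : ContDiff ℝ 2 φ) (z : E) (k : ℕ) :
    fderiv ℝ (fderiv ℝ (φ^[k])) z = ∑ j ∈ Finset.range k, stmt10T φ z k j := by
  have hφd : Differentiable ℝ φ := hφ.differentiable two_ne_zero
  have hitd : ∀ n, Differentiable ℝ (φ^[n]) := fun n =>
    (stmt10_iter_cd hφ n).differentiable two_ne_zero
  have hfd : ∀ n, Differentiable ℝ (fderiv ℝ (φ^[n])) := fun n =>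
    ((stmt10_iter_cd hφ n).fderiv_right (m := 1) (by norm_num)).differentiable one_ne_zero
  have hfd1 : Differentiable ℝ (fderiv ℝ φ) :=
    (hφ.fderiv_right (m := 1) (by norm_num)).differentiable one_ne_zero
  induction k with
  | zero =>
      have h0 : fderiv ℝ (φ^[0] : E → E) = fun _ => ContinuousLinearMap.id ℝ E := by
        funext x; simp [Function.iterate_zero, fderiv_id']
      rw [h0]
      simp
  | succ k ih =>
      have h1 : fderiv ℝ (φ^[k + 1]) =
          fun x => (fderiv ℝ φ (φ^[k] x)).comp (fderiv ℝ (φ^[k]) x) := by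
        funext x; exact stmt10_step hφ k x
      have hc : DifferentiableAt ℝ (fun x => fderiv ℝ φ (φ^[k] x)) z :=
        (hfd1 _).comp z (hitd k z)
      have hd : DifferentiableAt ℝ (fun x => fderiv ℝ (φ^[k]) x) z := hfd k z
      have h2 : fderiv ℝ (fun x => fderiv ℝ φ (φ^[k] x)) z =
          (fderiv ℝ (fderiv ℝ φ) (φ^[k] z)).comp (fderiv ℝ (φ^[k]) z) :=
        fderiv_comp z (hfd1 _) (hitd k z)
      rw [h1, fderiv_clm_comp hc hd, h2]
      rw [Finset.sum_range_succ]
      congr 1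
      · -- (compL (c z)).comp (fderiv (fderiv φ^[k]) z) = ∑ j<k, T (k+1) j
        have ihz : fderiv ℝ (fun x => fderiv ℝ (φ^[k]) x) z =
            ∑ j ∈ Finset.range k, stmt10T φ z k j := ih
        rw [ihz]
        ext x v
        simp only [ContinuousLinearMap.coe_comp', Function.comp_apply,
          ContinuousLinearMap.sum_apply, map_sum, ContinuousLinearMap.compL_apply,
          Finset.sum_apply]
        refine Finset.sum_congr rfl fun j hj => ?_
        have hjk : j < k := Finset.mem_range.mp hj
        simp only [stmt10T_apply, ContinuousLinearMap.compL_apply,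
          ContinuousLinearMap.coe_comp', Function.comp_apply]
        have e1 : k + 1 - j - 1 = (k - j - 1) + 1 := by omega
        have e2 : φ^[k - j - 1] (φ^[j + 1] z) = φ^[k] z := by
          rw [← Function.iterate_add_apply]
          congr 1; omega
        rw [e1, stmt10_step hφ (k - j - 1) (φ^[j+1] z), e2]
        simp
      · -- second piece = T (k+1) k
        ext x v
        simp only [stmt10T_apply, ContinuousLinearMap.coe_comp', Function.comp_apply,
          ContinuousLinearMap.flip_apply, ContinuousLinearMap.compL_apply]
        have e1 : k + 1 - k - 1 = 0 := by omega
        rw [e1]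
        simp [fderiv_id']


lemma stmt10T_apply_norm (φ : E → E) (z : E) (k j : ℕ) (x v : E) :
    ‖stmt10T φ z k j x v‖ ≤ ‖fderiv ℝ (φ^[k - j - 1]) (φ^[j + 1] z)‖ *
      (‖fderiv ℝ (fderiv ℝ φ) (φ^[j] z)‖ * (‖fderiv ℝ (φ^[j]) z‖ * ‖fderiv ℝ (φ^[j]) z‖))
      * ‖x‖ * ‖v‖ := by
  set A := fderiv ℝ (φ^[k - j - 1]) (φ^[j + 1] z)
  set B := fderiv ℝ (fderiv ℝ φ) (φ^[j] z)
  set P := fderiv ℝ (φ^[j]) z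
  rw [stmt10T_apply]
  calc ‖A ((B (P x)) (P v))‖ ≤ ‖A‖ * ‖(B (P x)) (P v)‖ := A.le_opNorm _
    _ ≤ ‖A‖ * (‖B (P x)‖ * ‖P v‖) := by
        gcongr; exact (B (P x)).le_opNorm _
    _ ≤ ‖A‖ * ((‖B‖ * ‖P x‖) * (‖P‖ * ‖v‖)) := by
        gcongr
        · exact B.le_opNorm _
        · exact P.le_opNorm _
    _ ≤ ‖A‖ * ((‖B‖ * (‖P‖ * ‖x‖)) * (‖P‖ * ‖v‖)) := by
        gcongr; exact P.le_opNorm _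
    _ = ‖A‖ * (‖B‖ * (‖P‖ * ‖P‖)) * ‖x‖ * ‖v‖ := by ring

lemma stmt10_norm_bound {φ : E → E} (hφ : ContDiff ℝ 2 φ) (z : E) (k : ℕ) :
    ‖fderiv ℝ (fderiv ℝ (φ^[k])) z‖ ≤
      ∑ j ∈ Finset.range k, ‖fderiv ℝ (φ^[k - j - 1]) (φ^[j + 1] z)‖ *
        (‖fderiv ℝ (fderiv ℝ φ) (φ^[j] z)‖ *
          (‖fderiv ℝ (φ^[j]) z‖ * ‖fderiv ℝ (φ^[j]) z‖)) := by
  rw [stmt10_key hφ z k]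
  set S := ∑ j ∈ Finset.range k, ‖fderiv ℝ (φ^[k - j - 1]) (φ^[j + 1] z)‖ *
        (‖fderiv ℝ (fderiv ℝ φ) (φ^[j] z)‖ *
          (‖fderiv ℝ (φ^[j]) z‖ * ‖fderiv ℝ (φ^[j]) z‖)) with hS
  have hS0 : 0 ≤ S := Finset.sum_nonneg fun j _ => by positivity
  refine ContinuousLinearMap.opNorm_le_bound _ hS0 fun x => ?_
  refine ContinuousLinearMap.opNorm_le_bound _ (by positivity) fun v => ?_
  have happ : (∑ j ∈ Finset.range k, stmt10T φ z k j) x v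
      = ∑ j ∈ Finset.range k, stmt10T φ z k j x v := by
    simp
  rw [happ]
  calc ‖∑ j ∈ Finset.range k, stmt10T φ z k j x v‖
      ≤ ∑ j ∈ Finset.range k, ‖stmt10T φ z k j x v‖ := norm_sum_le _ _
    _ ≤ ∑ j ∈ Finset.range k, ‖fderiv ℝ (φ^[k - j - 1]) (φ^[j + 1] z)‖ *
        (‖fderiv ℝ (fderiv ℝ φ) (φ^[j] z)‖ *
          (‖fderiv ℝ (φ^[j]) z‖ * ‖fderiv ℝ (φ^[j]) z‖)) * ‖x‖ * ‖v‖ :=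
        Finset.sum_le_sum fun j _ => stmt10T_apply_norm φ z k j x v
    _ = S * ‖x‖ * ‖v‖ := by rw [← Finset.sum_mul, ← Finset.sum_mul]

/-- Let `φ : ℝ² → ℝ²` be `C²` with second derivative bounded
by `C` along the orbit of `z`.  If for some `K ≥ 1` and `λᵤ > 1` we have
`‖Dφ^j_z‖ ≤ K λᵤ^j`, `‖Dφ^{k−j−1}_{φ^{j+1}z}‖·‖Dφ^j_z‖ ≤ K ‖Dφ^k_z‖` for all
`0 ≤ j < k` and `∑_{j<k} ‖Dφ^j_z‖ ≤ K ‖Dφ^k_z‖`, then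
`‖D²φ^k_z‖ ≤ K' ‖Dφ^k_z‖²` with `K'` depending only on `K` and `C`. -/
theorem stmt10 (K C : ℝ) (hK : 1 ≤ K) (hC : 0 ≤ C) :
    ∃ K' > 0, ∀ (lamu : ℝ), 1 < lamu →
      ∀ (φ : EuclideanSpace ℝ (Fin 2) → EuclideanSpace ℝ (Fin 2))
        (z : EuclideanSpace ℝ (Fin 2)) (k : ℕ),
      ContDiff ℝ 2 φ →
      (∀ n : ℕ, ‖fderiv ℝ (fderiv ℝ φ) (φ^[n] z)‖ ≤ C) →
      (∀ j : ℕ, ‖fderiv ℝ (φ^[j]) z‖ ≤ K * lamu ^ j) →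
      (∀ j < k, ‖fderiv ℝ (φ^[k - j - 1]) (φ^[j + 1] z)‖ * ‖fderiv ℝ (φ^[j]) z‖
          ≤ K * ‖fderiv ℝ (φ^[k]) z‖) →
      (∑ j ∈ Finset.range k, ‖fderiv ℝ (φ^[j]) z‖ ≤ K * ‖fderiv ℝ (φ^[k]) z‖) →
      ‖fderiv ℝ (fderiv ℝ (φ^[k])) z‖ ≤ K' * ‖fderiv ℝ (φ^[k]) z‖ ^ 2 := by
  refine ⟨C * K ^ 2 + 1, by positivity, ?_⟩
  intro lamu _ φ z k hφ hC2 _ hprod hsum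
  have hN0 : (0:ℝ) ≤ ‖fderiv ℝ (φ^[k]) z‖ := norm_nonneg _
  refine (stmt10_norm_bound hφ z k).trans ?_
  calc ∑ j ∈ Finset.range k, ‖fderiv ℝ (φ^[k - j - 1]) (φ^[j + 1] z)‖ *
        (‖fderiv ℝ (fderiv ℝ φ) (φ^[j] z)‖ *
          (‖fderiv ℝ (φ^[j]) z‖ * ‖fderiv ℝ (φ^[j]) z‖))
      ≤ ∑ j ∈ Finset.range k, (C * (K * ‖fderiv ℝ (φ^[k]) z‖)) * ‖fderiv ℝ (φ^[j]) z‖ := by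
        refine Finset.sum_le_sum fun j hj => ?_
        have hjk : j < k := Finset.mem_range.mp hj
        have h2 : ‖fderiv ℝ (fderiv ℝ φ) (φ^[j] z)‖ ≤ C := hC2 j
        have h3 : ‖fderiv ℝ (φ^[k - j - 1]) (φ^[j + 1] z)‖ * ‖fderiv ℝ (φ^[j]) z‖
            ≤ K * ‖fderiv ℝ (φ^[k]) z‖ := hprod j hjk
        set A := ‖fderiv ℝ (φ^[k - j - 1]) (φ^[j + 1] z)‖ with hA
        set B := ‖fderiv ℝ (fderiv ℝ φ) (φ^[j] z)‖ with hB
        set P := ‖fderiv ℝ (φ^[j]) z‖ with hP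
        have hA0 : 0 ≤ A := norm_nonneg _
        have hP0 : 0 ≤ P := norm_nonneg _
        calc A * (B * (P * P)) ≤ A * (C * (P * P)) := by gcongr
          _ = C * (A * P) * P := by ring
          _ ≤ C * (K * ‖fderiv ℝ (φ^[k]) z‖) * P := by gcongr
          _ = (C * (K * ‖fderiv ℝ (φ^[k]) z‖)) * P := by ring
    _ = (C * (K * ‖fderiv ℝ (φ^[k]) z‖)) * ∑ j ∈ Finset.range k, ‖fderiv ℝ (φ^[j]) z‖ := by
        rw [Finset.mul_sum]
    _ ≤ (C * (K * ‖fderiv ℝ (φ^[k]) z‖)) * (K * ‖fderiv ℝ (φ^[k]) z‖) :=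
        mul_le_mul_of_nonneg_left hsum (by positivity)
    _ = C * K ^ 2 * ‖fderiv ℝ (φ^[k]) z‖ ^ 2 := by ring
    _ ≤ (C * K ^ 2 + 1) * ‖fderiv ℝ (φ^[k]) z‖ ^ 2 := by nlinarith [sq_nonneg ‖fderiv ℝ (φ^[k]) z‖]
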